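/- Let X and Y be finite sets, let {ρ_x}_{x∈X} be d×d complex density matrices (Hermitian positive semidefinite with trace 1), let π be a probability distribution on X, and let {M_y}_{y∈Y} be Hermitian positive semidefinite d×d matrices with Σ_y M_y = I (a POVM). Assume the average state ρ̄ = Σ_x π_x ρ_x is invertible. Define the dual pair: M'_x = π_x · ρ̄^{−1/2} ρ_x ρ̄^{−1/2} for x ∈ X, π'_y = Tr(ρ̄ M_y) for y ∈ Y, and ρ'_y = ρ̄^{1/2} M_y ρ̄^{1/2} / π'_y whenever π'_y > 0. Then: (i) each M'_x is Hermitian positive semidefinite and Σ_x M'_x = I, so {M'_x} is a POVM; (ii) π' is a probability distribution on Y; (iii) each ρ'_y (with π'_y > 0) is a density matrix, and Σ_{y : π'_y > 0} π'_y ρ'_y = ρ̄, i.e. the average states of the original and dual ensembles coincide. -/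

import Mathlib

open Matrix
open scoped ComplexOrder Classical BigOperators

/-- The (Hermitian positive semidefinite) square root of a positive semidefinite
complex matrix; junk value `0` if the matrix is not positive semidefinite. -/
noncomputable def msqrt {d : ℕ} (A : Matrix (Fin d) (Fin d) ℂ) :
    Matrix (Fin d) (Fin d) ℂ :=
  if h : A.PosSemidef then
    (h.1.eigenvectorUnitary : Matrix (Fin d) (Fin d) ℂ) *
      diagonal ((↑) ∘ (√·) ∘ h.1.eigenvalues : Fin d → ℂ) *
      (star h.1.eigenvectorUnitary : Matrix (Fin d) (Fin d) ℂ) else 0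

lemma psd_smul {d : ℕ} {A : Matrix (Fin d) (Fin d) ℂ} (hA : A.PosSemidef) {c : ℝ}
    (hc : 0 ≤ c) : ((c : ℂ) • A).PosSemidef := by
  constructor
  · unfold Matrix.IsHermitian
    rw [conjTranspose_smul, hA.1]
    congr 1
    simp [Complex.star_def, Complex.conj_ofReal]
  · intro x
    exact (hA.smul (a := (c : ℂ)) (by exact_mod_cast hc)).2 x

lemma psd_trace_nonneg {d : ℕ} {A : Matrix (Fin d) (Fin d) ℂ} (hA : A.PosSemidef) :
    0 ≤ A.trace := by
  exact hA.trace_nonneg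

lemma psd_eq_zero_of_trace {d : ℕ} {A : Matrix (Fin d) (Fin d) ℂ} (hA : A.PosSemidef)
    (h : A.trace = 0) : A = 0 := by
  exact hA.trace_eq_zero_iff.mp h

/-- Finite-dimensional ensemble–observable duality (Proposition 1, parts
(i)–(iii)): given an ensemble `{π_x, ρ_x}` and a POVM `{M_y}` with invertible
average state `ρ̄ = Σ_x π_x ρ_x`, the dual objects
`M'_x = π_x ρ̄^{−1/2} ρ_x ρ̄^{−1/2}`, `π'_y = Tr(ρ̄ M_y)`,
`ρ'_y = ρ̄^{1/2} M_y ρ̄^{1/2}/π'_y` (for `π'_y > 0`) satisfy: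
(i) `{M'_x}` is a POVM; (ii) `π'` is a probability distribution on `Y`;
(iii) each `ρ'_y` with `π'_y > 0` is a density matrix and
`Σ_{y : π'_y > 0} π'_y ρ'_y = ρ̄`. -/
theorem stmt15 {X Y : Type*} [Fintype X] [Fintype Y] {d : ℕ}
    (ρ : X → Matrix (Fin d) (Fin d) ℂ)
    (hρ : ∀ x, (ρ x).PosSemidef) (hρtr : ∀ x, (ρ x).trace = 1)
    (π : X → ℝ) (hπ : ∀ x, 0 ≤ π x) (hπ1 : ∑ x, π x = 1)
    (M : Y → Matrix (Fin d) (Fin d) ℂ)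
    (hM : ∀ y, (M y).PosSemidef) (hM1 : ∑ y, M y = 1)
    (ρbar : Matrix (Fin d) (Fin d) ℂ) (hbar : ρbar = ∑ x, (π x : ℂ) • ρ x)
    (hinv : IsUnit ρbar.det)
    (M' : X → Matrix (Fin d) (Fin d) ℂ)
    (hM' : M' = fun x => (π x : ℂ) • ((msqrt ρbar)⁻¹ * ρ x * (msqrt ρbar)⁻¹))
    (π' : Y → ℝ) (hπ' : π' = fun y => ((ρbar * M y).trace).re)
    (ρ' : Y → Matrix (Fin d) (Fin d) ℂ)
    (hρ' : ρ' = fun y => ((π' y : ℂ))⁻¹ • (msqrt ρbar * M y * msqrt ρbar)) :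
    (∀ x, (M' x).PosSemidef) ∧ (∑ x, M' x) = 1 ∧
    (∀ y, 0 ≤ π' y) ∧ (∑ y, π' y) = 1 ∧
    (∀ y, 0 < π' y → (ρ' y).PosSemidef ∧ (ρ' y).trace = 1) ∧
    (∑ y ∈ Finset.univ.filter fun y => 0 < π' y, (π' y : ℂ) • ρ' y) = ρbar := by
  have hbarpsd : ρbar.PosSemidef := by
    rw [hbar]
    exact Finset.sum_induction _ _ (fun a b ha hb => ha.add hb) .zero
      (fun x _ => psd_smul (hρ x) (hπ x))
  set S := msqrt ρbar with hSdef
  have hS : S = (hbarpsd.1.eigenvectorUnitary : Matrix (Fin d) (Fin d) ℂ) *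
      diagonal ((↑) ∘ (√·) ∘ hbarpsd.1.eigenvalues : Fin d → ℂ) *
      (star hbarpsd.1.eigenvectorUnitary : Matrix (Fin d) (Fin d) ℂ) := dif_pos hbarpsd
  have hSpsd : S.PosSemidef := by
    rw [hS]
    have hD : (diagonal ((↑) ∘ (√·) ∘ hbarpsd.1.eigenvalues : Fin d → ℂ)).PosSemidef :=
      PosSemidef.diagonal fun i => by
        simp only [Function.comp_apply, Pi.zero_apply]
        exact_mod_cast Real.sqrt_nonneg _
    have := hD.mul_mul_conjTranspose_same (hbarpsd.1.eigenvectorUnitary : Matrix (Fin d) (Fin d) ℂ)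
    simpa [Unitary.coe_star, Matrix.star_eq_conjTranspose] using this
  have hSH : S.IsHermitian := hSpsd.1
  have hSS : S * S = ρbar := by
    rw [hS]
    conv_rhs => rw [hbarpsd.1.spectral_theorem, Unitary.conjStarAlgAut_apply]
    have hU := Unitary.coe_star_mul_self hbarpsd.1.eigenvectorUnitary
    rw [show ∀ A B C D E F : Matrix (Fin d) (Fin d) ℂ,
      A * B * C * (D * E * F) = A * (B * (C * D) * E) * F by intros; simp only [Matrix.mul_assoc]]
    rw [hU, Matrix.mul_one, diagonal_mul_diagonal]
    have hf : (fun i => (Complex.ofReal ∘ (fun x => √x) ∘ hbarpsd.1.eigenvalues) i *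
        (Complex.ofReal ∘ (fun x => √x) ∘ hbarpsd.1.eigenvalues) i) =
        RCLike.ofReal ∘ hbarpsd.1.eigenvalues := by
      funext i
      simp only [Function.comp_apply]
      rw [← Complex.ofReal_mul, Real.mul_self_sqrt (hbarpsd.eigenvalues_nonneg i)]
      rfl
    rw [hf]
  have hSdetU : IsUnit S.det := by
    rw [← hSS, det_mul] at hinv
    exact (IsUnit.mul_iff.mp hinv).1
  have hSinv : S⁻¹ * S = 1 := nonsing_inv_mul _ hSdetU
  have hSinv' : S * S⁻¹ = 1 := mul_nonsing_inv _ hSdetU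
  have hSinvH : (S⁻¹)ᴴ = S⁻¹ := by rw [conjTranspose_nonsing_inv, hSH.eq]
  -- (i)
  have part1 : ∀ x, (M' x).PosSemidef := by
    intro x
    rw [hM']
    refine psd_smul ?_ (hπ x)
    have := (hρ x).mul_mul_conjTranspose_same (S⁻¹)
    rwa [hSinvH] at this
  have part2 : (∑ x, M' x) = 1 := by
    rw [hM']
    have : ∀ x, (π x : ℂ) • (S⁻¹ * ρ x * S⁻¹) = S⁻¹ * ((π x : ℂ) • ρ x) * S⁻¹ := by
      intro x; rw [mul_smul_comm, smul_mul_assoc]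
    simp_rw [this]
    rw [← Finset.sum_mul, ← Finset.mul_sum, ← hbar, ← hSS, ← Matrix.mul_assoc,
      Matrix.mul_assoc (S⁻¹ * S), hSinv, hSinv', Matrix.mul_one]
  -- trace facts for each y
  have hSMS : ∀ y, (S * M y * S).PosSemidef := by
    intro y
    have := (hM y).mul_mul_conjTranspose_same S
    rwa [hSH.eq] at this
  have htr : ∀ y, (ρbar * M y).trace = (S * M y * S).trace := by
    intro y
    rw [← hSS, Matrix.mul_assoc, trace_mul_comm, Matrix.mul_assoc]
  have htrnn : ∀ y, 0 ≤ (ρbar * M y).trace := fun y =>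
    (htr y) ▸ psd_trace_nonneg (hSMS y)
  have htrre : ∀ y, ((π' y : ℝ) : ℂ) = (ρbar * M y).trace := by
    intro y
    have h := htrnn y
    rw [Complex.le_def] at h
    have him : (ρbar * M y).trace.im = 0 := by simpa using h.2.symm
    rw [hπ']
    simp only
    exact Complex.ext (by simp) (by simp [him])
  have part3 : ∀ y, 0 ≤ π' y := by
    intro y
    have h := htrnn y
    rw [Complex.le_def] at h
    rw [hπ']
    simpa using h.1
  have htrρbar : ρbar.trace = 1 := by
    rw [hbar, trace_sum]
    have : ∀ x, ((π x : ℂ) • ρ x).trace = (π x : ℂ) := by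
      intro x; rw [trace_smul, hρtr x, smul_eq_mul, mul_one]
    simp_rw [this, ← Complex.ofReal_sum, hπ1, Complex.ofReal_one]
  have part4 : (∑ y, π' y) = 1 := by
    have h : ((∑ y, π' y : ℝ) : ℂ) = 1 := by
      push_cast [htrre]
      rw [← trace_sum, ← Finset.mul_sum, hM1, Matrix.mul_one, htrρbar]
    exact_mod_cast h
  have part5 : ∀ y, 0 < π' y → (ρ' y).PosSemidef ∧ (ρ' y).trace = 1 := by
    intro y hy
    have hne : ((π' y : ℝ) : ℂ) ≠ 0 := by exact_mod_cast hy.ne'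
    constructor
    · rw [hρ']
      have hcast : ((π' y : ℝ) : ℂ)⁻¹ = (((π' y)⁻¹ : ℝ) : ℂ) := by push_cast; ring
      simp only
      rw [hcast]
      exact psd_smul (hSMS y) (inv_nonneg.mpr hy.le)
    · rw [hρ']
      simp only
      rw [trace_smul, smul_eq_mul, ← htr y, ← htrre y, inv_mul_cancel₀ hne]
  refine ⟨part1, part2, part3, part4, part5, ?_⟩
  have hterm : ∀ y ∈ Finset.univ.filter fun y => 0 < π' y,
      (π' y : ℂ) • ρ' y = S * M y * S := by
    intro y hy
    rw [Finset.mem_filter] at hy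
    have hne : ((π' y : ℝ) : ℂ) ≠ 0 := by exact_mod_cast hy.2.ne'
    rw [hρ']
    simp only
    rw [smul_smul, mul_inv_cancel₀ hne, one_smul]
  rw [Finset.sum_congr rfl hterm]
  have hzero : ∀ y ∈ Finset.univ, y ∉ (Finset.univ.filter fun y => 0 < π' y) →
      S * M y * S = 0 := by
    intro y _ hy
    rw [Finset.mem_filter] at hy
    have hy0 : π' y = 0 := le_antisymm (by simpa using hy) (part3 y)
    refine psd_eq_zero_of_trace (hSMS y) ?_
    rw [← htr y, ← htrre y, hy0, Complex.ofReal_zero]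
  rw [Finset.sum_subset (Finset.filter_subset _ _) hzero, ← Finset.sum_mul,
    ← Finset.mul_sum, hM1, Matrix.mul_one, hSS]
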